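/- Let N ≥ 2 and α, β > 0 with αβ < N². Then the coupled ODE system ((u₁')^N)' = N t^{N-1} (−u₂)^α, ((u₂')^N)' = N t^{N-1} (−u₁)^β on (0,1), with u₁, u₂ < 0 on [0,1), u₁'(0) = u₂'(0) = 0, and u₁(1) = u₂(1) = 0, has at most one solution (u₁, u₂) ∈ C¹[0,1] × C¹[0,1]. -/

import Mathlib

open Set MeasureTheory intervalIntegral

noncomputable def Gfun (N : ℕ) (γ : ℝ) (w : ℝ → ℝ) (s : ℝ) : ℝ :=
  ∫ r in (0:ℝ)..s, (N:ℝ) * r ^ (N-1) * (w r) ^ γ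

noncomputable def Phi (N : ℕ) (γ : ℝ) (w : ℝ → ℝ) (t : ℝ) : ℝ :=
  ∫ s in t..(1:ℝ), (Gfun N γ w s) ^ ((N:ℝ)⁻¹)

lemma contOn_integrand (N : ℕ) {γ : ℝ} (hγ : 0 ≤ γ) {w : ℝ → ℝ}
    (hw : ContinuousOn w (Icc 0 1)) :
    ContinuousOn (fun r => (N:ℝ) * r ^ (N-1) * (w r) ^ γ) (Icc 0 1) := by
  exact ((continuous_const.mul (continuous_pow _)).continuousOn).mul
    (hw.rpow_const (fun x _ => Or.inr hγ))

lemma Gcont (N : ℕ) {γ : ℝ} (hγ : 0 ≤ γ) {w : ℝ → ℝ}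
    (hw : ContinuousOn w (Icc 0 1)) :
    ContinuousOn (Gfun N γ w) (Icc 0 1) := by
  have h := intervalIntegral.continuousOn_primitive_interval
    (f := fun r => (N:ℝ) * r ^ (N-1) * (w r) ^ γ) (a := 0) (b := 1) (μ := volume) ?_
  · show ContinuousOn (fun s => Gfun N γ w s) _
    simpa [Gfun, uIcc_of_le (by norm_num : (0:ℝ) ≤ 1)] using h
  · rw [uIcc_of_le (by norm_num : (0:ℝ) ≤ 1)]
    exact (contOn_integrand N hγ hw).integrableOn_Icc

lemma Gnonneg (N : ℕ) {γ : ℝ} (hγ : 0 ≤ γ) {w : ℝ → ℝ}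
    (hwn : ∀ r ∈ Icc (0:ℝ) 1, 0 ≤ w r) :
    ∀ s ∈ Icc (0:ℝ) 1, 0 ≤ Gfun N γ w s := by
  intro s hs
  apply intervalIntegral.integral_nonneg hs.1
  intro r hr
  have h0 : 0 ≤ w r := hwn r ⟨hr.1, hr.2.trans hs.2⟩
  exact mul_nonneg (mul_nonneg (Nat.cast_nonneg N) (pow_nonneg hr.1 _)) (Real.rpow_nonneg h0 γ)

lemma Gmono (N : ℕ) {γ : ℝ} (hγ : 0 ≤ γ) {w : ℝ → ℝ}
    (hw : ContinuousOn w (Icc 0 1)) (hwn : ∀ r ∈ Icc (0:ℝ) 1, 0 ≤ w r) :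
    ∀ s ∈ Icc (0:ℝ) 1, ∀ s' ∈ Icc (0:ℝ) 1, s ≤ s' → Gfun N γ w s ≤ Gfun N γ w s' := by
  intro s hs s' hs' hss
  have hint : ∀ a b : ℝ, a ∈ Icc (0:ℝ) 1 → b ∈ Icc (0:ℝ) 1 →
      IntervalIntegrable (fun r => (N:ℝ) * r ^ (N-1) * (w r) ^ γ) volume a b := by
    intro a b ha hb
    apply ContinuousOn.intervalIntegrable
    exact (contOn_integrand N hγ hw).mono (uIcc_subset_Icc ha hb)
  have hadd := intervalIntegral.integral_add_adjacent_intervals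
    (hint 0 s ⟨le_refl 0, by norm_num⟩ hs) (hint s s' hs hs')
  have h2 : 0 ≤ ∫ r in s..s', (N:ℝ) * r ^ (N-1) * (w r) ^ γ := by
    apply intervalIntegral.integral_nonneg hss
    intro r hr
    have h0 : 0 ≤ w r := hwn r ⟨hs.1.trans hr.1, hr.2.trans hs'.2⟩
    exact mul_nonneg (mul_nonneg (Nat.cast_nonneg N) (pow_nonneg (hs.1.trans hr.1) _)) (Real.rpow_nonneg h0 γ)
  simp only [Gfun]
  rw [← hadd]; linarith

lemma right_limit_le {f : ℝ → ℝ} (hf : ContinuousOn f (Icc (0:ℝ) 1))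
    (h : ∀ s ∈ Ioo (0:ℝ) 1, f s ≤ 0) : f 1 ≤ 0 := by
  have h1 : (1:ℝ) ∈ closure (Ioo (0:ℝ) 1) := by
    rw [closure_Ioo (by norm_num : (0:ℝ) ≠ 1)]
    exact ⟨by norm_num, le_refl _⟩
  have hne : (nhdsWithin (1:ℝ) (Ioo (0:ℝ) 1)).NeBot :=
    mem_closure_iff_nhdsWithin_neBot.1 h1
  have ht : Filter.Tendsto f (nhdsWithin (1:ℝ) (Ioo (0:ℝ) 1)) (nhds (f 1)) :=
    (hf.continuousWithinAt (by norm_num : (1:ℝ) ∈ Icc (0:ℝ) 1)).mono_left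
      (nhdsWithin_mono _ Ioo_subset_Icc_self)
  exact le_of_tendsto ht (eventually_mem_nhdsWithin.mono (fun s hs => h s hs))

lemma right_limit_ge {f : ℝ → ℝ} (hf : ContinuousOn f (Icc (0:ℝ) 1))
    (h : ∀ s ∈ Ioo (0:ℝ) 1, 0 ≤ f s) : 0 ≤ f 1 := by
  have := right_limit_le (f := fun x => -f x) (hf.neg)
    (fun s hs => neg_nonpos.2 (h s hs))
  simpa using this

lemma rep (N : ℕ) (hN : 2 ≤ N) {γ : ℝ} (hγ : 0 < γ) {u w : ℝ → ℝ}
    (hud : ∀ t ∈ Icc (0:ℝ) 1, DifferentiableAt ℝ u t)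
    (hudc : ContinuousOn (deriv u) (Icc (0:ℝ) 1))
    (hw : ContinuousOn w (Icc (0:ℝ) 1))
    (hode : ∀ t ∈ Ioo (0:ℝ) 1,
      HasDerivAt (fun s => (deriv u s) ^ N) ((N:ℝ) * t ^ (N-1) * (-w t) ^ γ) t)
    (huneg : ∀ t ∈ Ico (0:ℝ) 1, u t < 0)
    (hwneg : ∀ t ∈ Ico (0:ℝ) 1, w t < 0)
    (hd0 : deriv u 0 = 0) (hu1 : u 1 = 0) :
    ∀ t ∈ Icc (0:ℝ) 1, -u t = Phi N γ (fun r => -w r) t := by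
  have hNne : N ≠ 0 := by omega
  have hwc : ContinuousOn (fun r => -w r) (Icc (0:ℝ) 1) := hw.neg
  have hic := contOn_integrand N hγ.le hwc
  have hint : ∀ a b : ℝ, a ∈ Icc (0:ℝ) 1 → b ∈ Icc (0:ℝ) 1 →
      IntervalIntegrable (fun r => (N:ℝ) * r ^ (N-1) * (-w r) ^ γ) volume a b := by
    intro a b ha hb
    exact (hic.mono (uIcc_subset_Icc ha hb)).intervalIntegrable
  -- (deriv u t)^N = Gfun t
  have pow_eq : ∀ t ∈ Icc (0:ℝ) 1, (deriv u t) ^ N = Gfun N γ (fun r => -w r) t := by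
    intro t ht
    have key := intervalIntegral.integral_eq_sub_of_hasDeriv_right_of_le ht.1
      (f := fun s => (deriv u s) ^ N)
      (f' := fun s => (N:ℝ) * s ^ (N-1) * (-w s) ^ γ)
      ((hudc.mono (Icc_subset_Icc le_rfl ht.2)).pow N)
      (fun x hx => (hode x ⟨hx.1, lt_of_lt_of_le hx.2 ht.2⟩).hasDerivWithinAt)
      (hint 0 t ⟨le_refl 0, by norm_num⟩ ht)
    simp only [Gfun]
    rw [key]
    simp [hd0, zero_pow hNne]
  have hGpos : ∀ t ∈ Ioc (0:ℝ) 1, 0 < Gfun N γ (fun r => -w r) t := by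
    intro t ht
    apply intervalIntegral.intervalIntegral_pos_of_pos_on
      (hint 0 t ⟨le_refl 0, by norm_num⟩ ⟨ht.1.le, ht.2⟩)
    · intro r hr
      have hr1 : r < 1 := lt_of_lt_of_le hr.2 ht.2
      have hwr : 0 < -w r := neg_pos.2 (hwneg r ⟨hr.1.le, hr1⟩)
      have : (0:ℝ) < (N:ℝ) := by positivity
      exact mul_pos (mul_pos this (pow_pos hr.1 _)) (Real.rpow_pos_of_pos hwr γ)
    · exact ht.1
  have dne : ∀ t ∈ Ioo (0:ℝ) 1, deriv u t ≠ 0 := by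
    intro t ht h0
    have := pow_eq t ⟨ht.1.le, ht.2.le⟩
    rw [h0, zero_pow hNne] at this
    exact absurd this.symm (ne_of_gt (hGpos t ⟨ht.1, ht.2.le⟩))
  have dpos : ∀ t ∈ Ioo (0:ℝ) 1, 0 < deriv u t := by
    intro t ht
    rcases (dne t ht).lt_or_gt with hneg | hpos
    · exfalso
      -- then deriv u < 0 on all of Ioo 0 1
      have allneg : ∀ s ∈ Ioo (0:ℝ) 1, deriv u s < 0 := by
        intro s hs
        rcases (dne s hs).lt_or_gt with h' | h'
        · exact h'
        · exfalso
          have hsub : uIcc t s ⊆ Icc (0:ℝ) 1 :=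
            (ordConnected_Icc.uIcc_subset ⟨ht.1.le, ht.2.le⟩ ⟨hs.1.le, hs.2.le⟩)
          have him := intermediate_value_uIcc (hudc.mono hsub)
          have h0m : (0:ℝ) ∈ uIcc (deriv u t) (deriv u s) := by
            rw [mem_uIcc]; left; exact ⟨hneg.le, h'.le⟩
          obtain ⟨c, hc, hc0⟩ := him h0m
          have hcIoo : c ∈ Ioo (0:ℝ) 1 :=
            ordConnected_Ioo.uIcc_subset ht hs hc
          exact dne c hcIoo hc0
      have hAD : ∀ x ∈ uIcc t (1:ℝ), DifferentiableAt ℝ u x := by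
        intro x hx
        rw [uIcc_of_le ht.2.le] at hx
        exact hud x ⟨ht.1.le.trans hx.1, hx.2⟩
      have hII : IntervalIntegrable (deriv u) volume t 1 :=
        ((hudc.mono (uIcc_subset_Icc ⟨ht.1.le, ht.2.le⟩ (by norm_num))).intervalIntegrable)
      have heq := intervalIntegral.integral_deriv_eq_sub hAD hII
      rw [hu1] at heq
      have hpos' : 0 < -u t := neg_pos.2 (huneg t ⟨ht.1.le, ht.2⟩)
      have hle' : 0 ≤ ∫ y in t..1, -(deriv u y) := by
        apply intervalIntegral.integral_nonneg ht.2.le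
        intro x hx
        rw [neg_nonneg]
        rcases eq_or_lt_of_le hx.2 with h1 | h1
        · subst h1
          exact right_limit_le hudc (fun s hs => (allneg s hs).le)
        · exact (allneg x ⟨lt_of_lt_of_le ht.1 hx.1, h1⟩).le
      have hle : (∫ y in t..1, deriv u y) ≤ 0 := by
        rw [intervalIntegral.integral_neg] at hle'; linarith
      rw [heq] at hle; linarith
    · exact hpos
  have dnonneg : ∀ t ∈ Icc (0:ℝ) 1, 0 ≤ deriv u t := by
    intro t ht
    rcases eq_or_lt_of_le ht.1 with h0 | h0
    · rw [← h0, hd0]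
    rcases eq_or_lt_of_le ht.2 with h1 | h1
    · rw [h1]
      exact right_limit_ge hudc (fun s hs => (dpos s hs).le)
    · exact (dpos t ⟨h0, h1⟩).le
  have dform : ∀ t ∈ Icc (0:ℝ) 1,
      deriv u t = (Gfun N γ (fun r => -w r) t) ^ ((N:ℝ)⁻¹) := by
    intro t ht
    have h1 := Real.pow_rpow_inv_natCast (dnonneg t ht) hNne
    rw [pow_eq t ht] at h1
    exact h1.symm
  intro t ht
  have hAD : ∀ x ∈ uIcc t (1:ℝ), DifferentiableAt ℝ u x := by
    intro x hx
    rw [uIcc_of_le ht.2] at hx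
    exact hud x ⟨ht.1.trans hx.1, hx.2⟩
  have hII : IntervalIntegrable (deriv u) volume t 1 :=
    ((hudc.mono (uIcc_subset_Icc ht (by norm_num))).intervalIntegrable)
  have heq := intervalIntegral.integral_deriv_eq_sub hAD hII
  rw [hu1] at heq
  have hcong : (∫ y in t..1, deriv u y)
      = ∫ s in t..1, (Gfun N γ (fun r => -w r) s) ^ ((N:ℝ)⁻¹) := by
    apply _root_.intervalIntegral.integral_congr
    intro s hs
    rw [uIcc_of_le ht.2] at hs
    exact dform s ⟨ht.1.trans hs.1, hs.2⟩
  simp only [Phi]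
  rw [← hcong, heq]
  ring

lemma phiIntegrandCont (N : ℕ) {γ : ℝ} (hγ : 0 ≤ γ) {w : ℝ → ℝ}
    (hw : ContinuousOn w (Icc 0 1)) :
    ContinuousOn (fun s => (Gfun N γ w s) ^ ((N:ℝ)⁻¹)) (Icc (0:ℝ) 1) :=
  (Gcont N hγ hw).rpow_const (fun x _ => Or.inr (by positivity))

lemma phi_compare (N : ℕ) (hN : 2 ≤ N) {γ c : ℝ} (hγ : 0 < γ) (hc : 0 ≤ c)
    {w₁ w₂ : ℝ → ℝ} (h1 : ContinuousOn w₁ (Icc 0 1)) (h2 : ContinuousOn w₂ (Icc 0 1))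
    (h1n : ∀ r ∈ Icc (0:ℝ) 1, 0 ≤ w₁ r) (h2n : ∀ r ∈ Icc (0:ℝ) 1, 0 ≤ w₂ r)
    (hle : ∀ r ∈ Icc (0:ℝ) 1, w₁ r ≤ c * w₂ r) :
    ∀ t ∈ Icc (0:ℝ) 1, Phi N γ w₁ t ≤ c ^ (γ * (N:ℝ)⁻¹) * Phi N γ w₂ t := by
  have hNne : N ≠ 0 := by omega
  have hGle : ∀ s ∈ Icc (0:ℝ) 1, Gfun N γ w₁ s ≤ c ^ γ * Gfun N γ w₂ s := by
    intro s hs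
    have hmul : c ^ γ * Gfun N γ w₂ s
        = ∫ r in (0:ℝ)..s, c ^ γ * ((N:ℝ) * r ^ (N-1) * (w₂ r) ^ γ) := by
      rw [Gfun, intervalIntegral.integral_const_mul]
    rw [hmul, Gfun]
    apply intervalIntegral.integral_mono_on hs.1
    · exact ((contOn_integrand N hγ.le h1).mono
        (uIcc_subset_Icc ⟨le_refl 0, by norm_num⟩ hs)).intervalIntegrable
    · exact (((contOn_integrand N hγ.le h2).mono
        (uIcc_subset_Icc ⟨le_refl 0, by norm_num⟩ hs)).intervalIntegrable).const_mul _
    · intro r hr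
      have hrI : r ∈ Icc (0:ℝ) 1 := ⟨hr.1, hr.2.trans hs.2⟩
      have key : (w₁ r) ^ γ ≤ c ^ γ * (w₂ r) ^ γ := by
        rw [← Real.mul_rpow hc (h2n r hrI)]
        exact Real.rpow_le_rpow (h1n r hrI) (hle r hrI) hγ.le
      calc (N:ℝ) * r ^ (N-1) * (w₁ r) ^ γ
          ≤ (N:ℝ) * r ^ (N-1) * (c ^ γ * (w₂ r) ^ γ) := by
            apply mul_le_mul_of_nonneg_left key
            exact mul_nonneg (Nat.cast_nonneg N) (pow_nonneg hr.1 _)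
        _ = c ^ γ * ((N:ℝ) * r ^ (N-1) * (w₂ r) ^ γ) := by ring
  intro t ht
  have hmul : c ^ (γ * (N:ℝ)⁻¹) * Phi N γ w₂ t
      = ∫ s in t..(1:ℝ), c ^ (γ * (N:ℝ)⁻¹) * (Gfun N γ w₂ s) ^ ((N:ℝ)⁻¹) := by
    rw [Phi, intervalIntegral.integral_const_mul]
  rw [hmul, Phi]
  apply intervalIntegral.integral_mono_on ht.2
  · exact ((phiIntegrandCont N hγ.le h1).mono
      (uIcc_subset_Icc ht ⟨by norm_num, le_refl 1⟩)).intervalIntegrable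
  · exact (((phiIntegrandCont N hγ.le h2).mono
      (uIcc_subset_Icc ht ⟨by norm_num, le_refl 1⟩)).intervalIntegrable).const_mul _
  · intro s hs
    have hsI : s ∈ Icc (0:ℝ) 1 := ⟨ht.1.trans hs.1, hs.2⟩
    have h1' : (Gfun N γ w₁ s) ^ ((N:ℝ)⁻¹) ≤ (c ^ γ * Gfun N γ w₂ s) ^ ((N:ℝ)⁻¹) :=
      Real.rpow_le_rpow (Gnonneg N hγ.le h1n s hsI) (hGle s hsI) (by positivity)
    have h2' : (c ^ γ * Gfun N γ w₂ s) ^ ((N:ℝ)⁻¹)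
        = c ^ (γ * (N:ℝ)⁻¹) * (Gfun N γ w₂ s) ^ ((N:ℝ)⁻¹) := by
      rw [Real.mul_rpow (Real.rpow_nonneg hc γ) (Gnonneg N hγ.le h2n s hsI),
        ← Real.rpow_mul hc]
    rw [h2'] at h1'
    exact h1'

lemma phi_upper (N : ℕ) (hN : 2 ≤ N) {γ : ℝ} (hγ : 0 < γ) {w : ℝ → ℝ}
    (hw : ContinuousOn w (Icc 0 1)) (hwn : ∀ r ∈ Icc (0:ℝ) 1, 0 ≤ w r) :
    ∀ t ∈ Icc (0:ℝ) 1, Phi N γ w t ≤ (Gfun N γ w 1) ^ ((N:ℝ)⁻¹) * (1 - t) := by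
  intro t ht
  have h1 : Phi N γ w t ≤ ∫ _ in t..(1:ℝ), (Gfun N γ w 1) ^ ((N:ℝ)⁻¹) := by
    rw [Phi]
    apply intervalIntegral.integral_mono_on ht.2
    · exact ((phiIntegrandCont N hγ.le hw).mono
        (uIcc_subset_Icc ht ⟨by norm_num, le_refl 1⟩)).intervalIntegrable
    · exact intervalIntegrable_const
    · intro s hs
      have hsI : s ∈ Icc (0:ℝ) 1 := ⟨ht.1.trans hs.1, hs.2⟩
      exact Real.rpow_le_rpow (Gnonneg N hγ.le hwn s hsI)
        (Gmono N hγ.le hw hwn s hsI 1 ⟨by norm_num, le_refl 1⟩ hs.2) (by positivity)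
  rw [intervalIntegral.integral_const] at h1
  rw [smul_eq_mul] at h1
  linarith [h1]

lemma phi_lower (N : ℕ) (hN : 2 ≤ N) {γ : ℝ} (hγ : 0 < γ) {w : ℝ → ℝ}
    (hw : ContinuousOn w (Icc 0 1)) (hwn : ∀ r ∈ Icc (0:ℝ) 1, 0 ≤ w r)
    (hwpos : ∀ r ∈ Ioo (0:ℝ) 1, 0 < w r) :
    ∃ m : ℝ, 0 < m ∧ ∀ t ∈ Icc (0:ℝ) 1, m * (1 - t) ≤ Phi N γ w t := by
  have hNne : N ≠ 0 := by omega
  have hGhalf : 0 < Gfun N γ w (1/2) := by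
    apply intervalIntegral.intervalIntegral_pos_of_pos_on
    · exact ((contOn_integrand N hγ.le hw).mono
        (uIcc_subset_Icc ⟨le_refl 0, by norm_num⟩ ⟨by norm_num, by norm_num⟩)).intervalIntegrable
    · intro r hr
      have hrI : r ∈ Ioo (0:ℝ) 1 := ⟨hr.1, by linarith [hr.2]⟩
      have : (0:ℝ) < (N:ℝ) := by positivity
      exact mul_pos (mul_pos this (pow_pos hr.1 _))
        (Real.rpow_pos_of_pos (hwpos r hrI) γ)
    · norm_num
  set m0 : ℝ := (Gfun N γ w (1/2)) ^ ((N:ℝ)⁻¹) with hm0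
  have hm0pos : 0 < m0 := Real.rpow_pos_of_pos hGhalf _
  refine ⟨m0 / 2, by positivity, ?_⟩
  intro t ht
  have hbase : ∀ a : ℝ, a ∈ Icc (0:ℝ) 1 → (1/2:ℝ) ≤ a →
      m0 * (1 - a) ≤ Phi N γ w a := by
    intro a ha h2a
    have h1 : (∫ _ in a..(1:ℝ), m0) ≤ Phi N γ w a := by
      rw [Phi]
      apply intervalIntegral.integral_mono_on ha.2
      · exact intervalIntegrable_const
      · exact ((phiIntegrandCont N hγ.le hw).mono
          (uIcc_subset_Icc ha ⟨by norm_num, le_refl 1⟩)).intervalIntegrable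
      · intro s hs
        have hsI : s ∈ Icc (0:ℝ) 1 := ⟨ha.1.trans hs.1, hs.2⟩
        exact Real.rpow_le_rpow hGhalf.le
          (Gmono N hγ.le hw hwn (1/2) ⟨by norm_num, by norm_num⟩ s hsI
            (le_trans h2a hs.1)) (by positivity)
    rw [intervalIntegral.integral_const, smul_eq_mul] at h1
    linarith [h1]
  rcases le_or_gt (1/2 : ℝ) t with h2t | h2t
  · have := hbase t ht h2t
    nlinarith [this, hm0pos, sub_nonneg.2 ht.2]
  · -- t < 1/2 : split the integral
    have hI1 : IntervalIntegrable (fun s => (Gfun N γ w s) ^ ((N:ℝ)⁻¹)) volume t (1/2) :=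
      ((phiIntegrandCont N hγ.le hw).mono
        (uIcc_subset_Icc ht ⟨by norm_num, by norm_num⟩)).intervalIntegrable
    have hI2 : IntervalIntegrable (fun s => (Gfun N γ w s) ^ ((N:ℝ)⁻¹)) volume (1/2) 1 :=
      ((phiIntegrandCont N hγ.le hw).mono
        (uIcc_subset_Icc ⟨by norm_num, by norm_num⟩ ⟨by norm_num, le_refl 1⟩)).intervalIntegrable
    have hsplit := intervalIntegral.integral_add_adjacent_intervals hI1 hI2
    have hfirst : 0 ≤ ∫ s in t..(1/2:ℝ), (Gfun N γ w s) ^ ((N:ℝ)⁻¹) := by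
      apply intervalIntegral.integral_nonneg h2t.le
      intro s hs
      exact Real.rpow_nonneg (Gnonneg N hγ.le hwn s ⟨ht.1.trans hs.1, by linarith [hs.2]⟩) _
    have hsecond := hbase (1/2) ⟨by norm_num, by norm_num⟩ (le_refl _)
    have hphi2 : m0 * (1/2 : ℝ) ≤ ∫ s in (1/2:ℝ)..1, (Gfun N γ w s) ^ ((N:ℝ)⁻¹) := by
      have : m0 * (1 - 1/2 : ℝ) = m0 * (1/2:ℝ) := by norm_num
      rw [Phi] at hsecond; linarith [hsecond]
    have : m0 / 2 ≤ Phi N γ w t := by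
      rw [Phi, ← hsplit]
      nlinarith [hfirst, hphi2]
    nlinarith [this, hm0pos, ht.1, sub_nonneg.2 ht.2, h2t]

lemma key_half (N : ℕ) (hN : 2 ≤ N) {α β : ℝ} (hα : 0 < α) (hβ : 0 < β)
    (hαβ : α * β < (N:ℝ)^2)
    {x₁ x₂ y₁ y₂ : ℝ → ℝ}
    (hx₁c : ContinuousOn x₁ (Icc 0 1)) (hx₂c : ContinuousOn x₂ (Icc 0 1))
    (hy₁c : ContinuousOn y₁ (Icc 0 1)) (hy₂c : ContinuousOn y₂ (Icc 0 1))
    (hx₁n : ∀ t ∈ Icc (0:ℝ) 1, 0 ≤ x₁ t) (hx₂n : ∀ t ∈ Icc (0:ℝ) 1, 0 ≤ x₂ t)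
    (hy₁n : ∀ t ∈ Icc (0:ℝ) 1, 0 ≤ y₁ t) (hy₂n : ∀ t ∈ Icc (0:ℝ) 1, 0 ≤ y₂ t)
    (hy₁pos : ∀ t ∈ Ioo (0:ℝ) 1, 0 < y₁ t)
    (hx₁ : ∀ t ∈ Icc (0:ℝ) 1, x₁ t = Phi N α x₂ t)
    (hx₂ : ∀ t ∈ Icc (0:ℝ) 1, x₂ t = Phi N β x₁ t)
    (hy₁ : ∀ t ∈ Icc (0:ℝ) 1, y₁ t = Phi N α y₂ t)
    (hy₂ : ∀ t ∈ Icc (0:ℝ) 1, y₂ t = Phi N β y₁ t) :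
    ∀ t ∈ Icc (0:ℝ) 1, x₂ t ≤ y₂ t := by
  have hNpos : (0:ℝ) < (N:ℝ) := by positivity
  set σ : ℝ := α * (N:ℝ)⁻¹ * (β * (N:ℝ)⁻¹) with hσ
  have hσpos : 0 < σ := by positivity
  have hσ1 : σ < 1 := by
    have hσeq : σ = α * β / ((N:ℝ)^2) := by
      rw [hσ]; field_simp
    rw [hσeq, div_lt_one (by positivity)]
    exact hαβ
  -- the contraction step
  have step : ∀ c : ℝ, 0 ≤ c → (∀ t ∈ Icc (0:ℝ) 1, x₂ t ≤ c * y₂ t) →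
      ∀ t ∈ Icc (0:ℝ) 1, x₂ t ≤ c ^ σ * y₂ t := by
    intro c hc h
    have s1 : ∀ t ∈ Icc (0:ℝ) 1, x₁ t ≤ c ^ (α * (N:ℝ)⁻¹) * y₁ t := by
      intro t ht
      rw [hx₁ t ht, hy₁ t ht]
      exact phi_compare N hN hα hc hx₂c hy₂c hx₂n hy₂n h t ht
    have s2 : ∀ t ∈ Icc (0:ℝ) 1,
        x₂ t ≤ (c ^ (α * (N:ℝ)⁻¹)) ^ (β * (N:ℝ)⁻¹) * y₂ t := by
      intro t ht
      rw [hx₂ t ht, hy₂ t ht]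
      exact phi_compare N hN hβ (Real.rpow_nonneg hc _) hx₁c hy₁c hx₁n hy₁n s1 t ht
    intro t ht
    have hpow : (c ^ (α * (N:ℝ)⁻¹)) ^ (β * (N:ℝ)⁻¹) = c ^ σ := by
      rw [hσ]; exact (Real.rpow_mul hc _ _).symm
    rw [← hpow]
    exact s2 t ht
  -- nonemptiness constants
  obtain ⟨m, hm, hmy⟩ := phi_lower N hN hβ hy₁c hy₁n hy₁pos
  have hyl : ∀ t ∈ Icc (0:ℝ) 1, m * (1-t) ≤ y₂ t := by
    intro t ht; rw [hy₂ t ht]; exact hmy t ht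
  set K : ℝ := (Gfun N β x₁ 1) ^ ((N:ℝ)⁻¹) with hK
  have hKn : 0 ≤ K :=
    Real.rpow_nonneg (Gnonneg N hβ.le hx₁n 1 ⟨by norm_num, le_refl 1⟩) _
  have hxu : ∀ t ∈ Icc (0:ℝ) 1, x₂ t ≤ K * (1-t) := by
    intro t ht; rw [hx₂ t ht]; exact phi_upper N hN hβ hx₁c hx₁n t ht
  set S : Set ℝ := {c : ℝ | 1 ≤ c ∧ ∀ t ∈ Icc (0:ℝ) 1, x₂ t ≤ c * y₂ t} with hS
  set c₀ : ℝ := max 1 (K/m) with hc₀def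
  have hc₀S : c₀ ∈ S := by
    constructor
    · exact le_max_left _ _
    · intro t ht
      have h1 : x₂ t ≤ (K/m) * (m * (1-t)) := by
        rw [← mul_assoc, div_mul_cancel₀ _ (ne_of_gt hm)]
        exact hxu t ht
      have h2 : (K/m) * (m * (1-t)) ≤ (K/m) * y₂ t :=
        mul_le_mul_of_nonneg_left (hyl t ht) (div_nonneg hKn hm.le)
      have h3 : (K/m) * y₂ t ≤ c₀ * y₂ t :=
        mul_le_mul_of_nonneg_right (le_max_right _ _) (hy₂n t ht)
      linarith
  have hSne : S.Nonempty := ⟨c₀, hc₀S⟩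
  have hbdd : BddBelow S := ⟨1, fun c hc => hc.1⟩
  set cs : ℝ := sInf S with hcs
  have h1c : 1 ≤ cs := le_csInf hSne (fun c hc => hc.1)
  have hcsS : cs ∈ S := by
    refine ⟨h1c, ?_⟩
    intro t ht
    rcases eq_or_lt_of_le (hy₂n t ht) with h0 | h0
    · have := hc₀S.2 t ht
      rw [← h0] at this ⊢
      simpa using this
    · have hlb : ∀ c ∈ S, x₂ t / y₂ t ≤ c := by
        intro c hc
        exact (div_le_iff₀ h0).2 (hc.2 t ht)
      have := le_csInf hSne hlb
      exact (div_le_iff₀ h0).1 this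
  have hmapS : cs ^ σ ∈ S := by
    constructor
    · calc (1:ℝ) = cs ^ (0:ℝ) := (Real.rpow_zero cs).symm
        _ ≤ cs ^ σ := Real.rpow_le_rpow_of_exponent_le h1c hσpos.le
    · exact step cs (by linarith) hcsS.2
  have hle : cs ≤ cs ^ σ := csInf_le hbdd hmapS
  have hcs1 : cs = 1 := by
    rcases eq_or_lt_of_le h1c with h1 | h1
    · exact h1.symm
    · exfalso
      have : cs ^ σ < cs ^ (1:ℝ) := Real.rpow_lt_rpow_of_exponent_lt h1 hσ1
      rw [Real.rpow_one] at this
      linarith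
  intro t ht
  have := hcsS.2 t ht
  rw [hcs1, one_mul] at this
  exact this

/-- `(u₁, u₂)` is a `C¹` solution of the radial coupled Monge–Ampère ODE system
`((u₁')^N)' = N t^{N-1} f(-u₂)`, `((u₂')^N)' = N t^{N-1} g(-u₁)` on `(0,1)`,
with `u₁, u₂ < 0` on `[0,1)`, `u₁'(0) = u₂'(0) = 0`, `u₁(1) = u₂(1) = 0`. -/
def IsRadialSol (N : ℕ) (f g : ℝ → ℝ) (u₁ u₂ : ℝ → ℝ) : Prop :=
  (∀ t ∈ Icc (0:ℝ) 1, DifferentiableAt ℝ u₁ t) ∧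
  (∀ t ∈ Icc (0:ℝ) 1, DifferentiableAt ℝ u₂ t) ∧
  ContinuousOn (deriv u₁) (Icc (0:ℝ) 1) ∧
  ContinuousOn (deriv u₂) (Icc (0:ℝ) 1) ∧
  (∀ t ∈ Ioo (0:ℝ) 1,
    HasDerivAt (fun s => (deriv u₁ s) ^ N) ((N:ℝ) * t ^ (N - 1) * f (-u₂ t)) t) ∧
  (∀ t ∈ Ioo (0:ℝ) 1,
    HasDerivAt (fun s => (deriv u₂ s) ^ N) ((N:ℝ) * t ^ (N - 1) * g (-u₁ t)) t) ∧
  (∀ t ∈ Ico (0:ℝ) 1, u₁ t < 0 ∧ u₂ t < 0) ∧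
  deriv u₁ 0 = 0 ∧ deriv u₂ 0 = 0 ∧ u₁ 1 = 0 ∧ u₂ 1 = 0

/-- Package the representation/positivity data for one solution. -/
lemma sol_package (N : ℕ) (hN : 2 ≤ N) {α β : ℝ} (hα : 0 < α) (hβ : 0 < β)
    {u₁ u₂ : ℝ → ℝ}
    (hu : IsRadialSol N (fun x => x ^ α) (fun x => x ^ β) u₁ u₂) :
    (ContinuousOn (fun t => -u₁ t) (Icc 0 1)) ∧
    (ContinuousOn (fun t => -u₂ t) (Icc 0 1)) ∧
    (∀ t ∈ Icc (0:ℝ) 1, 0 ≤ -u₁ t) ∧ (∀ t ∈ Icc (0:ℝ) 1, 0 ≤ -u₂ t) ∧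
    (∀ t ∈ Ioo (0:ℝ) 1, 0 < -u₁ t) ∧ (∀ t ∈ Ioo (0:ℝ) 1, 0 < -u₂ t) ∧
    (∀ t ∈ Icc (0:ℝ) 1, -u₁ t = Phi N α (fun r => -u₂ r) t) ∧
    (∀ t ∈ Icc (0:ℝ) 1, -u₂ t = Phi N β (fun r => -u₁ r) t) := by
  obtain ⟨hu1d, hu2d, hu1dc, hu2dc, hode1, hode2, hneg, hd10, hd20, hu11, hu21⟩ := hu
  have hu1c : ContinuousOn u₁ (Icc (0:ℝ) 1) :=
    fun t ht => (hu1d t ht).continuousAt.continuousWithinAt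
  have hu2c : ContinuousOn u₂ (Icc (0:ℝ) 1) :=
    fun t ht => (hu2d t ht).continuousAt.continuousWithinAt
  have hneg1 : ∀ t ∈ Ico (0:ℝ) 1, u₁ t < 0 := fun t ht => (hneg t ht).1
  have hneg2 : ∀ t ∈ Ico (0:ℝ) 1, u₂ t < 0 := fun t ht => (hneg t ht).2
  have hn1 : ∀ t ∈ Icc (0:ℝ) 1, 0 ≤ -u₁ t := by
    intro t ht
    rcases eq_or_lt_of_le ht.2 with h1 | h1
    · rw [h1, hu11]; norm_num
    · exact (neg_pos.2 (hneg1 t ⟨ht.1, h1⟩)).le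
  have hn2 : ∀ t ∈ Icc (0:ℝ) 1, 0 ≤ -u₂ t := by
    intro t ht
    rcases eq_or_lt_of_le ht.2 with h1 | h1
    · rw [h1, hu21]; norm_num
    · exact (neg_pos.2 (hneg2 t ⟨ht.1, h1⟩)).le
  refine ⟨hu1c.neg, hu2c.neg, hn1, hn2,
    (fun t ht => neg_pos.2 (hneg1 t ⟨ht.1.le, ht.2⟩)),
    (fun t ht => neg_pos.2 (hneg2 t ⟨ht.1.le, ht.2⟩)), ?_, ?_⟩
  · exact rep N hN hα hu1d hu1dc hu2c hode1 hneg1 hneg2 hd10 hu11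
  · exact rep N hN hβ hu2d hu2dc hu1c hode2 hneg2 hneg1 hd20 hu21

theorem stmt10 (N : ℕ) (hN : 2 ≤ N) (α β : ℝ) (hα : 0 < α) (hβ : 0 < β)
    (hαβ : α * β < (N:ℝ) ^ 2)
    (u₁ u₂ v₁ v₂ : ℝ → ℝ)
    (hu : IsRadialSol N (fun x => x ^ α) (fun x => x ^ β) u₁ u₂)
    (hv : IsRadialSol N (fun x => x ^ α) (fun x => x ^ β) v₁ v₂) :
    ∀ t ∈ Icc (0:ℝ) 1, u₁ t = v₁ t ∧ u₂ t = v₂ t := by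
  obtain ⟨hu1c, hu2c, hu1n, hu2n, hu1p, hu2p, hu1r, hu2r⟩ := sol_package N hN hα hβ hu
  obtain ⟨hv1c, hv2c, hv1n, hv2n, hv1p, hv2p, hv1r, hv2r⟩ := sol_package N hN hα hβ hv
  have huv : ∀ t ∈ Icc (0:ℝ) 1, -u₂ t ≤ -v₂ t :=
    key_half N hN hα hβ hαβ hu1c hu2c hv1c hv2c hu1n hu2n hv1n hv2n hv1p
      hu1r hu2r hv1r hv2r
  have hvu : ∀ t ∈ Icc (0:ℝ) 1, -v₂ t ≤ -u₂ t :=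
    key_half N hN hα hβ hαβ hv1c hv2c hu1c hu2c hv1n hv2n hu1n hu2n hu1p
      hv1r hv2r hu1r hu2r
  have h2eq : ∀ t ∈ Icc (0:ℝ) 1, u₂ t = v₂ t := by
    intro t ht
    have h1 := huv t ht
    have h2 := hvu t ht
    linarith
  have hGeq : ∀ s ∈ Icc (0:ℝ) 1,
      Gfun N α (fun r => -u₂ r) s = Gfun N α (fun r => -v₂ r) s := by
    intro s hs
    apply _root_.intervalIntegral.integral_congr
    intro r hr
    rw [uIcc_of_le hs.1] at hr
    have := h2eq r ⟨hr.1, hr.2.trans hs.2⟩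
    simp only [this]
  have hPeq : ∀ t ∈ Icc (0:ℝ) 1,
      Phi N α (fun r => -u₂ r) t = Phi N α (fun r => -v₂ r) t := by
    intro t ht
    apply _root_.intervalIntegral.integral_congr
    intro s hs
    rw [uIcc_of_le ht.2] at hs
    have := hGeq s ⟨ht.1.trans hs.1, hs.2⟩
    simp only [this]
  intro t ht
  refine ⟨?_, h2eq t ht⟩
  have h1 := hu1r t ht
  have h2 := hv1r t ht
  rw [hPeq t ht] at h1
  linarith [h1, h2]
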